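/- Let K be a complete nonarchimedean field of residue characteristic ≠ 2 and let M, M' ∈ GLₙ(K) be symmetric matrices. There exists ε > 0 (depending on M) such that if all entries of M − M' have absolute value < ε, then the quadratic forms with Gram matrices M and M' are equivalent over K, i.e., there exists P ∈ GLₙ(K) with Pᵀ M P = M'. -/

import Mathlib

open Matrix
open scoped NNReal

attribute [local instance] Matrix.linftyOpNormedRing Matrix.linftyOpNormedAlgebra

section aux

variable {K : Type*} [NontriviallyNormedField K] {n : ℕ}

private lemma mat_entry_le_norm (A : Matrix (Fin n) (Fin n) K) (i j : Fin n) :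
    ‖A i j‖ ≤ ‖A‖ := by
  rw [← coe_nnnorm, ← coe_nnnorm, NNReal.coe_le_coe, Matrix.linfty_opNNNorm_def]
  exact le_trans (Finset.single_le_sum (f := fun j => ‖A i j‖₊) (fun _ _ => zero_le)
    (Finset.mem_univ j)) (Finset.le_sup (f := fun i => ∑ j, ‖A i j‖₊) (Finset.mem_univ i))

private lemma mat_norm_le {A : Matrix (Fin n) (Fin n) K} {c : ℝ} (hc : 0 ≤ c)
    (h : ∀ i j, ‖A i j‖ ≤ c) : ‖A‖ ≤ n * c := by
  lift c to ℝ≥0 using hc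
  rw [← coe_nnnorm]
  have : ‖A‖₊ ≤ (n : ℝ≥0) * c := by
    rw [Matrix.linfty_opNNNorm_def]
    refine Finset.sup_le fun i _ => ?_
    calc ∑ j, ‖A i j‖₊ ≤ Finset.univ.card • c :=
          Finset.sum_le_card_nsmul _ _ _ fun j _ => by
            exact_mod_cast h i j
      _ = (n : ℝ≥0) * c := by simp [nsmul_eq_mul]
  exact_mod_cast this

private lemma mat_transpose_norm_le (A : Matrix (Fin n) (Fin n) K) :
    ‖Aᵀ‖ ≤ n * ‖A‖ :=
  mat_norm_le (norm_nonneg A) fun i j => mat_entry_le_norm A j i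

end aux

open Matrix
set_option maxHeartbeats 1000000 in
/-- Local constancy of the equivalence class of a nondegenerate quadratic form over a
complete nonarchimedean field of residue characteristic `≠ 2` (i.e. `‖2‖ = 1`):
Gram matrices that are sufficiently close are congruent. -/
theorem gram_matrices_close_implies_congruent
    {K : Type*} [NontriviallyNormedField K] [CompleteSpace K] [IsUltrametricDist K]
    (h2 : ‖(2 : K)‖ = 1) {n : ℕ}
    (M : Matrix (Fin n) (Fin n) K) (hMsymm : M.IsSymm) (hM : IsUnit M.det) :
    ∃ ε > (0 : ℝ), ∀ M' : Matrix (Fin n) (Fin n) K, M'.IsSymm → IsUnit M'.det →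
      (∀ i j, ‖M i j - M' i j‖ < ε) →
      ∃ P : Matrix (Fin n) (Fin n) K, IsUnit P.det ∧ Pᵀ * M * P = M' := by
  haveI : CompleteSpace (PiLp 1 fun _ : Fin n => K) :=
    inferInstance
  haveI : @CompleteSpace (Matrix (Fin n) (Fin n) K) PseudoMetricSpace.toUniformSpace :=
    (inferInstance : CompleteSpace (Fin n → Fin n → K))
  have h2ne : (2 : K) ≠ 0 := fun h => by rw [h, norm_zero] at h2; exact one_ne_zero h2.symm
  have hhalf : ‖(2 : K)⁻¹‖ = 1 := by rw [norm_inv, h2, inv_one]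
  set N := M⁻¹ with hN
  have hMN : M * N = 1 := Matrix.mul_nonsing_inv M hM
  set cN : ℝ := ‖N‖ with hcN
  set cM : ℝ := ‖M‖ with hcM
  have hcN0 : 0 ≤ cN := norm_nonneg _
  have hcM0 : 0 ≤ cM := norm_nonneg _
  set D : ℝ := cN * cM * n with hD
  have hD0 : 0 ≤ D := mul_nonneg (mul_nonneg hcN0 hcM0) (Nat.cast_nonneg n)
  have h4D : (0:ℝ) < 4*D+1 := by linarith
  set r : ℝ := min (1/2) (1/(4*D+1)) with hr
  have hr0 : 0 < r := lt_min (by norm_num) (div_pos one_pos h4D)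
  have hr12 : r ≤ 1/2 := min_le_left _ _
  have hrD : (4*D+1) * r ≤ 1 := by
    have h1 : r ≤ 1/(4*D+1) := min_le_right _ _
    calc (4*D+1) * r ≤ (4*D+1) * (1/(4*D+1)) := by
          exact mul_le_mul_of_nonneg_left h1 h4D.le
      _ = 1 := mul_one_div_cancel h4D.ne'
  have hDr : 2 * (D * r) ≤ 1/2 := by nlinarith
  have hcNn : (0:ℝ) ≤ cN*n := mul_nonneg hcN0 (Nat.cast_nonneg n)
  have hq0 : (0:ℝ) < 2*(cN*n+1) := by linarith
  set ε : ℝ := r / (2*(cN*n+1)) with hε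
  have hε0 : 0 < ε := div_pos hr0 hq0
  refine ⟨ε, hε0, fun M' hM'symm _hM'det hclose => ?_⟩
  set E := M' - M with hE
  have hEsymm : Eᵀ = E := by rw [hE, transpose_sub, hMsymm.eq, hM'symm.eq]
  have hEnorm : ‖E‖ ≤ n * ε := by
    refine mat_norm_le hε0.le fun i j => ?_
    have := hclose i j
    rw [hE]
    simpa [Matrix.sub_apply, norm_sub_rev] using this.le
  have hEkey : cN * ‖E‖ ≤ r / 2 := by
    have h1 : cN * ‖E‖ ≤ cN * (n * ε) := mul_le_mul_of_nonneg_left hEnorm hcN0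
    have h2' : ε * (2*(cN*n+1)) = r := by rw [hε, div_mul_cancel₀ _ hq0.ne']
    nlinarith [norm_nonneg E]
  -- the iteration map
  set f : Matrix (Fin n) (Fin n) K → Matrix (Fin n) (Fin n) K :=
    fun X => (2:K)⁻¹ • (N * E - N * (Xᵀ * M * X)) with hf
  -- norm bound helper
  have hquad : ∀ X Y : Matrix (Fin n) (Fin n) K, ‖N * (Xᵀ * M * Y)‖ ≤ D * ‖X‖ * ‖Y‖ := by
    intro X Y
    have h1 : ‖Xᵀ * M * Y‖ ≤ ‖Xᵀ‖ * cM * ‖Y‖ :=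
      le_trans (Matrix.linfty_opNorm_mul _ _)
        (mul_le_mul_of_nonneg_right (Matrix.linfty_opNorm_mul _ _) (norm_nonneg _))
    have h3 : ‖Xᵀ‖ * cM * ‖Y‖ ≤ ((n:ℝ) * ‖X‖) * cM * ‖Y‖ :=
      mul_le_mul_of_nonneg_right
        (mul_le_mul_of_nonneg_right (mat_transpose_norm_le X) hcM0) (norm_nonneg _)
    calc ‖N * (Xᵀ * M * Y)‖ ≤ cN * ‖Xᵀ * M * Y‖ := Matrix.linfty_opNorm_mul _ _
      _ ≤ cN * (((n:ℝ) * ‖X‖) * cM * ‖Y‖) :=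
          mul_le_mul_of_nonneg_left (h1.trans h3) hcN0
      _ = D * ‖X‖ * ‖Y‖ := by rw [hD]; ring
  have hmem : ∀ {X : Matrix (Fin n) (Fin n) K},
      X ∈ Metric.closedBall (0 : Matrix (Fin n) (Fin n) K) r → ‖X‖ ≤ r := fun hX => by
    rwa [Metric.mem_closedBall, dist_zero_right] at hX
  have hsf : Set.MapsTo f (Metric.closedBall 0 r) (Metric.closedBall 0 r) := by
    intro X hX
    have hXr := hmem hX
    have hX0 : (0:ℝ) ≤ ‖X‖ := norm_nonneg _
    rw [Metric.mem_closedBall, dist_zero_right]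
    have hfX : ‖f X‖ = ‖N * E - N * (Xᵀ * M * X)‖ := by
      simp only [hf]; rw [norm_smul, hhalf, one_mul]
    rw [hfX]
    calc ‖N * E - N * (Xᵀ * M * X)‖ ≤ ‖N * E‖ + ‖N * (Xᵀ * M * X)‖ := norm_sub_le _ _
      _ ≤ cN * ‖E‖ + D * ‖X‖ * ‖X‖ := add_le_add (Matrix.linfty_opNorm_mul _ _) (hquad X X)
      _ ≤ r/2 + D * r * r := by
          refine add_le_add hEkey ?_
          exact mul_le_mul (mul_le_mul_of_nonneg_left hXr hD0) hXr hX0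
            (mul_nonneg hD0 hr0.le)
      _ ≤ r := by nlinarith
  have hcontr : ContractingWith (2⁻¹ : ℝ≥0) (hsf.restrict f _ _) := by
    constructor
    · have h12 : ((2⁻¹ : ℝ≥0) : ℝ) < 1 := by norm_num
      exact_mod_cast h12
    · refine LipschitzWith.of_dist_le_mul fun X Y => ?_
      have hX := hmem X.2
      have hY := hmem Y.2
      rw [Subtype.dist_eq, Subtype.dist_eq, Set.MapsTo.val_restrict_apply,
        Set.MapsTo.val_restrict_apply, dist_eq_norm, dist_eq_norm]
      have hdiff : f X.1 - f Y.1 = (2:K)⁻¹ • (N * (Y.1ᵀ * M * Y.1) - N * (X.1ᵀ * M * X.1)) := by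
        simp only [hf, ← smul_sub]
        congr 1
        abel
      have hdec : Y.1ᵀ * M * Y.1 - X.1ᵀ * M * X.1
          = Y.1ᵀ * M * (Y.1 - X.1) + (Y.1 - X.1)ᵀ * M * X.1 := by
        rw [transpose_sub]; noncomm_ring
      have a1 : D * ‖Y.1‖ * ‖Y.1 - X.1‖ ≤ D * r * ‖Y.1 - X.1‖ :=
        mul_le_mul_of_nonneg_right (mul_le_mul_of_nonneg_left hY hD0) (norm_nonneg _)
      have a2 : D * ‖Y.1 - X.1‖ * ‖X.1‖ ≤ D * ‖Y.1 - X.1‖ * r :=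
        mul_le_mul_of_nonneg_left hX (mul_nonneg hD0 (norm_nonneg _))
      calc ‖f X.1 - f Y.1‖ = ‖N * (Y.1ᵀ * M * Y.1) - N * (X.1ᵀ * M * X.1)‖ := by
            rw [hdiff, norm_smul, hhalf, one_mul]
        _ = ‖N * (Y.1ᵀ * M * (Y.1 - X.1)) + N * ((Y.1 - X.1)ᵀ * M * X.1)‖ := by
            rw [← mul_sub, hdec, mul_add]
        _ ≤ ‖N * (Y.1ᵀ * M * (Y.1 - X.1))‖ + ‖N * ((Y.1 - X.1)ᵀ * M * X.1)‖ := norm_add_le _ _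
        _ ≤ D * ‖Y.1‖ * ‖Y.1 - X.1‖ + D * ‖Y.1 - X.1‖ * ‖X.1‖ :=
            add_le_add (hquad Y.1 (Y.1 - X.1)) (hquad (Y.1 - X.1) X.1)
        _ ≤ D * r * ‖Y.1 - X.1‖ + D * ‖Y.1 - X.1‖ * r := add_le_add a1 a2
        _ = 2 * (D * r) * ‖Y.1 - X.1‖ := by ring
        _ ≤ (1/2) * ‖Y.1 - X.1‖ := by nlinarith [norm_nonneg (Y.1 - X.1)]
        _ = ((2⁻¹ : ℝ≥0) : ℝ) * ‖X.1 - Y.1‖ := by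
            rw [norm_sub_rev]
            norm_num
  obtain ⟨X, hXs, hXfix, -, -⟩ := ContractingWith.exists_fixedPoint'
    Metric.isClosed_closedBall.isComplete hsf hcontr (Metric.mem_closedBall_self hr0.le)
    (edist_ne_top _ _)
  have hXr : ‖X‖ ≤ r := hmem hXs
  have hx : X = (2:K)⁻¹ • (N * E - N * (Xᵀ * M * X)) := by
    have h := hXfix.symm
    rw [hf] at h
    exact h
  have key : M * X = (2:K)⁻¹ • (E - Xᵀ * M * X) := by
    conv_lhs => rw [hx]
    rw [mul_smul_comm, mul_sub, ← mul_assoc, ← mul_assoc, hMN, one_mul, one_mul]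
  have tt : (Xᵀ * M * X)ᵀ = Xᵀ * M * X := by
    rw [transpose_mul, transpose_mul, transpose_transpose, hMsymm.eq, ← mul_assoc]
  have key2 : Xᵀ * M = (2:K)⁻¹ • (E - Xᵀ * M * X) := by
    calc Xᵀ * M = (M * X)ᵀ := by rw [transpose_mul, hMsymm.eq]
      _ = ((2:K)⁻¹ • (E - Xᵀ * M * X))ᵀ := by rw [key]
      _ = (2:K)⁻¹ • (E - Xᵀ * M * X) := by rw [transpose_smul, transpose_sub, hEsymm, tt]
  refine ⟨1 + X, ?_, ?_⟩
  · have hXlt : ‖-X‖ < 1 := by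
      rw [norm_neg]
      exact lt_of_le_of_lt hXr (lt_of_le_of_lt hr12 (by norm_num))
    have hu : IsUnit (1 + X) := by
      simpa using isUnit_one_sub_of_norm_lt_one hXlt
    exact (Matrix.isUnit_iff_isUnit_det _).mp hu
  · have expand : (1 + X)ᵀ * M * (1 + X) = M + (Xᵀ * M + M * X) + Xᵀ * M * X := by
      rw [transpose_add, transpose_one]; noncomm_ring
    have h11 : (2:K)⁻¹ + 2⁻¹ = 1 := by
      rw [← two_mul]; exact mul_inv_cancel₀ h2ne
    set Q := Xᵀ * M * X with hQ
    have h22 : (2:K)⁻¹ • (E - Q) + (2:K)⁻¹ • (E - Q) = E - Q := by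
      rw [← add_smul, h11, one_smul]
    rw [expand, key, key2, h22, hE]
    abel
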